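/- Let φ: G → H be a graph homomorphism with G simply connected, let A ⊆ E(G) be φ-stable, and let I be an A-intersection invariant (either I_A or I_{A,u}). Then any two odd closed walks C and C' of G satisfy I(C) = I(C'). -/

import Mathlib

namespace Discrete

variable {V : Type*} {W : Type*}

/-- `IsWalk G l` : the nonempty list `l` of vertices forms a walk in `G`. -/
def IsWalk (G : SimpleGraph V) : List V → Prop
  | [] => False
  | [_] => True
  | a :: b :: l => G.Adj a b ∧ IsWalk G (b :: l)

/-- One elementary homotopy step: substitution, insertion, or deletion. -/
inductive Step (G : SimpleGraph V) : List V → List V → Prop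
  | sub (p q : List V) (a b c b' : V) (h1 : G.Adj a b') (h2 : G.Adj b' c) :
      Step G (p ++ a :: b :: c :: q) (p ++ a :: b' :: c :: q)
  | ins (p q : List V) (a w : V) (h : G.Adj a w) :
      Step G (p ++ a :: q) (p ++ a :: w :: a :: q)
  | del (p q : List V) (a w : V) :
      Step G (p ++ a :: w :: a :: q) (p ++ a :: q)

/-- Two walks are homotopic if one may be transformed into the other via a
finite sequence of substitution, insertion and deletion steps. -/
def Homotopic (G : SimpleGraph V) : List V → List V → Prop :=
  Relation.ReflTransGen (Step G)

/-- The multiset of edges of a walk, counted with multiplicity. -/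
def walkEdges (l : List V) : Multiset (Sym2 V) :=
  ↑((l.zip l.tail).map (Function.uncurry Sym2.mk))

/-- A closed walk: a walk whose endpoints coincide. -/
def IsClosedWalk (G : SimpleGraph V) (l : List V) : Prop :=
  IsWalk G l ∧ l.head? = l.getLast?

/-- A closed walk based at `v0`. -/
def IsClosedWalkAt (G : SimpleGraph V) (v0 : V) (l : List V) : Prop :=
  IsWalk G l ∧ l.head? = some v0 ∧ l.getLast? = some v0

/-- A cycle, recorded as a closed walk `v0 v1 ... v_{k-1} v0` of length at
least 3 whose vertices `v0, ..., v_{k-1}` are distinct. -/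
def IsCycleList (G : SimpleGraph V) (l : List V) : Prop :=
  IsClosedWalk G l ∧ l.dropLast.Nodup ∧ 4 ≤ l.length

/-- `G` is simply connected: any two walks with the same endpoints and lengths
of the same parity are homotopic. -/
def SimplyConnected (G : SimpleGraph V) : Prop :=
  G.Connected ∧ ∀ P P' : List V, IsWalk G P → IsWalk G P' →
    P.head? = P'.head? → P.getLast? = P'.getLast? →
    (P.length - 1) % 2 = (P'.length - 1) % 2 → Homotopic G P P'

/-- Two edges of `H` lie in a common 4-cycle of `H`. -/
def InCommonC4 (H : SimpleGraph W) (e f : Sym2 W) : Prop :=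
  ∃ a b c d : W, a ≠ b ∧ a ≠ c ∧ a ≠ d ∧ b ≠ c ∧ b ≠ d ∧ c ≠ d ∧
    H.Adj a b ∧ H.Adj b c ∧ H.Adj c d ∧ H.Adj d a ∧
    (e = s(a, b) ∨ e = s(b, c) ∨ e = s(c, d) ∨ e = s(d, a)) ∧
    (f = s(a, b) ∨ f = s(b, c) ∨ f = s(c, d) ∨ f = s(d, a))

/-- The equivalence relation on `E(H)` generated by lying in a common `C4`;
`C4Equiv H e f` says `f` lies in the `C4`-closure of `e`. -/
def C4Equiv (H : SimpleGraph W) : Sym2 W → Sym2 W → Prop :=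
  Relation.EqvGen (InCommonC4 H)

/-- Two edges share an endpoint. -/
def Touch (e f : Sym2 V) : Prop := ∃ v, v ∈ e ∧ v ∈ f

/-- `[e]_φ`: the edge set of the connected component containing `e` of the
subgraph of `G` induced by the edge set `φ⁻¹(C4-closure of φ(e))`. -/
def PhiClass {G : SimpleGraph V} {H : SimpleGraph W} (φ : G →g H) (e : Sym2 V) :
    Set (Sym2 V) :=
  {e' | Relation.ReflTransGen (fun a b =>
      a ∈ G.edgeSet ∧ b ∈ G.edgeSet ∧
      C4Equiv H (Sym2.map φ a) (Sym2.map φ e) ∧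
      C4Equiv H (Sym2.map φ b) (Sym2.map φ e) ∧ Touch a b) e e'}

/-- `A ⊆ E(G)` is `φ`-stable if it is a union of classes `[e]_φ`. -/
def PhiStable {G : SimpleGraph V} {H : SimpleGraph W} (φ : G →g H)
    (A : Set (Sym2 V)) : Prop :=
  A ⊆ G.edgeSet ∧ ∀ e ∈ A, PhiClass φ e ⊆ A

/-- `A_u`: the edges of `A` having an endpoint in `φ⁻¹(u)`. -/
def Au {G : SimpleGraph V} {H : SimpleGraph W} (φ : G →g H)
    (A : Set (Sym2 V)) (u : W) : Set (Sym2 V) :=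
  {e ∈ A | ∃ v ∈ e, φ v = u}

open Classical in
/-- The intersection invariant `|F ∩ A| mod 2` of a multiset of edges. -/
noncomputable def inv2 (A : Set (Sym2 V)) (F : Multiset (Sym2 V)) : ℕ :=
  (F.filter (· ∈ A)).card % 2

/-- Concatenation of closed walks. -/
def catWalk (l l' : List V) : List V := l ++ l'.tail

/-- `n`-fold concatenation power of a closed walk based at `v0`. -/
def powWalk (v0 : V) (l : List V) : ℕ → List V
  | 0 => [v0]
  | n + 1 => catWalk l (powWalk v0 l n)

/-- The discrete fundamental group `π₁(G)` is cyclic: some closed walk `P`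
based at a vertex `v0` has the property that every closed walk based at `v0`
is homotopic to a power of `P` or of its reverse. -/
def CyclicPi1 (G : SimpleGraph V) : Prop :=
  G.Connected ∧ ∃ (v0 : V) (P : List V), IsClosedWalkAt G v0 P ∧
    ∀ Q : List V, IsClosedWalkAt G v0 Q →
      ∃ n : ℕ, Homotopic G Q (powWalk v0 P n) ∨ Homotopic G Q (powWalk v0 P.reverse n)

/-- `H` contains no cycle of length `n`. -/
def CFree (H : SimpleGraph V) (n : ℕ) : Prop :=
  ∀ (v : V) (c : H.Walk v v), c.IsCycle → c.length ≠ n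


section Aux

variable {G : SimpleGraph V} {H : SimpleGraph W}

lemma isWalk_cons_cons {a b : V} {l : List V} :
    IsWalk G (a :: b :: l) ↔ G.Adj a b ∧ IsWalk G (b :: l) := Iff.rfl

lemma isWalk_ne_nil {l : List V} (h : IsWalk G l) : l ≠ [] := by
  cases l with
  | nil => exact absurd h (by simp [IsWalk])
  | cons a t => simp

lemma isWalk_append_iff (p : List V) (x : V) (r : List V) :
    IsWalk G (p ++ x :: r) ↔ IsWalk G (p ++ [x]) ∧ IsWalk G (x :: r) := by
  induction p with
  | nil =>
    simp only [List.nil_append]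
    constructor
    · exact fun h => ⟨trivial, h⟩
    · exact fun h => h.2
  | cons h t ih =>
    cases t with
    | nil =>
      simp only [List.cons_append, List.nil_append, isWalk_cons_cons]
      constructor
      · rintro ⟨h1, h2⟩; exact ⟨⟨h1, trivial⟩, h2⟩
      · rintro ⟨⟨h1, -⟩, h2⟩; exact ⟨h1, h2⟩
    | cons h2 t2 =>
      simp only [List.cons_append, isWalk_cons_cons] at *
      constructor
      · rintro ⟨h1, hw⟩
        obtain ⟨w1, w2⟩ := ih.mp hw
        exact ⟨⟨h1, w1⟩, w2⟩
      · rintro ⟨⟨h1, w1⟩, w2⟩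
        exact ⟨h1, ih.mpr ⟨w1, w2⟩⟩

lemma isWalk_step {l l' : List V} (hst : Step G l l') (h : IsWalk G l) : IsWalk G l' := by
  cases hst with
  | sub p q a b c b' h1 h2 =>
    rw [isWalk_append_iff] at h ⊢
    refine ⟨h.1, ?_⟩
    have h3 := h.2
    rw [isWalk_cons_cons, isWalk_cons_cons] at h3
    exact isWalk_cons_cons.mpr ⟨h1, isWalk_cons_cons.mpr ⟨h2, h3.2.2⟩⟩
  | ins p q a w hw =>
    rw [isWalk_append_iff] at h ⊢
    exact ⟨h.1, isWalk_cons_cons.mpr ⟨hw, isWalk_cons_cons.mpr ⟨hw.symm, h.2⟩⟩⟩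
  | del p q a w =>
    rw [isWalk_append_iff] at h ⊢
    refine ⟨h.1, ?_⟩
    have h3 := h.2
    rw [isWalk_cons_cons, isWalk_cons_cons] at h3
    exact h3.2.2

lemma isWalk_homotopic {l l' : List V} (h : Homotopic G l l') (hw : IsWalk G l) :
    IsWalk G l' := by
  induction h with
  | refl => exact hw
  | tail _ hst ih => exact isWalk_step hst ih

lemma isWalk_cat {l l' : List V} (h : IsWalk G l) (h' : IsWalk G l')
    (hh : l.getLast? = l'.head?) : IsWalk G (l ++ l'.tail) := by
  induction l with
  | nil => exact absurd h (by simp [IsWalk])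
  | cons a t ih =>
    cases t with
    | nil =>
      cases l' with
      | nil => exact absurd h' (by simp [IsWalk])
      | cons x t' =>
        simp only [List.getLast?_singleton, List.head?_cons, Option.some.injEq] at hh
        subst hh
        simpa using h'
    | cons b t2 =>
      rw [List.cons_append, isWalk_cons_cons] at *
      exact ⟨h.1, ih h.2 (by simpa [List.getLast?_cons_cons] using hh)⟩

lemma isWalk_reverse {l : List V} (h : IsWalk G l) : IsWalk G l.reverse := by
  induction l with
  | nil => exact absurd h (by simp [IsWalk])
  | cons a t ih =>
    cases t with
    | nil => simpa using h
    | cons b t2 =>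
      rw [isWalk_cons_cons] at h
      have hcat := isWalk_cat (ih h.2)
        (show IsWalk G [b, a] from isWalk_cons_cons.mpr ⟨h.1.symm, trivial⟩)
        (by rw [List.getLast?_reverse]; rfl)
      simpa [catWalk] using hcat

lemma walkEdges_cons_cons (a b : V) (l : List V) :
    walkEdges (a :: b :: l) = s(a, b) ::ₘ walkEdges (b :: l) := rfl

lemma walkEdges_singleton (a : V) : walkEdges [a] = 0 := rfl

lemma walkEdges_append (p : List V) (x : V) (r : List V) :
    walkEdges (p ++ x :: r) = walkEdges (p ++ [x]) + walkEdges (x :: r) := by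
  induction p with
  | nil => simp [walkEdges_singleton]
  | cons h t ih =>
    cases t with
    | nil => simp [walkEdges_cons_cons, walkEdges_singleton]
    | cons h2 t2 =>
      simp only [List.cons_append] at *
      rw [walkEdges_cons_cons, walkEdges_cons_cons, ih, Multiset.cons_add]

lemma walkEdges_cat {l l' : List V} (hl : l ≠ []) (hh : l.getLast? = l'.head?)
    (hl' : l' ≠ []) : walkEdges (catWalk l l') = walkEdges l + walkEdges l' := by
  cases l' with
  | nil => exact absurd rfl hl'
  | cons x t =>
    have h1 : l.getLast hl = x := by
      rw [List.getLast?_eq_getLast hl] at hh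
      simpa using hh
    have hx : l.dropLast ++ [x] = l := by
      rw [← h1]; exact List.dropLast_append_getLast hl
    show walkEdges (l ++ t) = _
    rw [← hx, List.append_assoc, List.singleton_append, walkEdges_append]

lemma walkEdges_reverse (l : List V) : walkEdges l.reverse = walkEdges l := by
  induction l with
  | nil => rfl
  | cons a t ih =>
    cases t with
    | nil => rfl
    | cons b t2 =>
      have h1 : (a :: b :: t2).reverse = catWalk (b :: t2).reverse [b, a] := by
        simp [catWalk]
      rw [h1, walkEdges_cat (by simp) (by rw [List.getLast?_reverse]; rfl) (by simp), ih]
      have h2 : walkEdges [b, a] = {s(a, b)} := by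
        show (s(b, a) ::ₘ 0) = _
        rw [Sym2.eq_swap]
        rfl
      rw [h2, walkEdges_cons_cons a b t2, add_comm, Multiset.singleton_add]

open Classical in
/-- number of edges of `F` in `S`. -/
noncomputable def cardE (S : Set (Sym2 V)) (F : Multiset (Sym2 V)) : ℕ :=
  (F.filter (· ∈ S)).card

lemma inv2_eq_cardE (S : Set (Sym2 V)) (F : Multiset (Sym2 V)) :
    inv2 S F = cardE S F % 2 := rfl

lemma cardE_add (S : Set (Sym2 V)) (F F' : Multiset (Sym2 V)) :
    cardE S (F + F') = cardE S F + cardE S F' := by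
  classical
  simp [cardE, Multiset.filter_add]

open Classical in
lemma cardE_cons (S : Set (Sym2 V)) (e : Sym2 V) (F : Multiset (Sym2 V)) :
    cardE S (e ::ₘ F) = (if e ∈ S then 1 else 0) + cardE S F := by
  simp [cardE, Multiset.filter_cons, apply_ite Multiset.card]

lemma touch_of_mem {e f : Sym2 V} {v : V} (hv : v ∈ e) (hv' : v ∈ f) : Touch e f :=
  ⟨v, hv, hv'⟩

lemma mem_A_of_rel {φ : G →g H} {A : Set (Sym2 V)} (hA : PhiStable φ A) {e f : Sym2 V}
    (he : e ∈ G.edgeSet) (hf : f ∈ G.edgeSet)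
    (hc : C4Equiv H (Sym2.map φ f) (Sym2.map φ e)) (ht : Touch e f) :
    e ∈ A → f ∈ A := fun heA =>
  hA.2 e heA (Relation.ReflTransGen.single ⟨he, hf, Relation.EqvGen.refl _, hc, ht⟩)

lemma mem_A_iff_of_rel {φ : G →g H} {A : Set (Sym2 V)} (hA : PhiStable φ A) {e f : Sym2 V}
    (he : e ∈ G.edgeSet) (hf : f ∈ G.edgeSet)
    (hc : C4Equiv H (Sym2.map φ f) (Sym2.map φ e)) (ht : Touch e f) :
    (e ∈ A ↔ f ∈ A) :=
  ⟨mem_A_of_rel hA he hf hc ht,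
   mem_A_of_rel hA hf he (Relation.EqvGen.symm _ _ hc) ⟨ht.choose, ht.choose_spec.2, ht.choose_spec.1⟩⟩

lemma cardE_zero (S : Set (Sym2 V)) : cardE S 0 = 0 := by
  classical
  simp [cardE]

lemma core_parity {φ : G →g H} {A : Set (Sym2 V)} (hA : PhiStable φ A)
    (U : Set W) (hU : U = Set.univ ∨ ∃ u : W, U = {u})
    {a b c b' : V} (hab : G.Adj a b) (hbc : G.Adj b c)
    (hab' : G.Adj a b') (hb'c : G.Adj b' c) :
    cardE {e | e ∈ A ∧ ∃ v ∈ e, φ v ∈ U} (walkEdges [a, b, c]) % 2 =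
      cardE {e | e ∈ A ∧ ∃ v ∈ e, φ v ∈ U} (walkEdges [a, b', c]) % 2 := by
  classical
  set S : Set (Sym2 V) := {e | e ∈ A ∧ ∃ v ∈ e, φ v ∈ U} with hS
  rw [show walkEdges [a, b, c] = s(a, b) ::ₘ s(b, c) ::ₘ 0 from rfl,
    show walkEdges [a, b', c] = s(a, b') ::ₘ s(b', c) ::ₘ 0 from rfl]
  simp only [cardE_cons, cardE_zero, Nat.add_zero]
  have hS_mem : ∀ x y : V, (s(x, y) ∈ S) ↔ (s(x, y) ∈ A ∧ (φ x ∈ U ∨ φ y ∈ U)) := by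
    intro x y
    simp only [hS, Set.mem_setOf_eq, Sym2.mem_iff]
    constructor
    · rintro ⟨h1, v, (rfl | rfl), h2⟩
      · exact ⟨h1, Or.inl h2⟩
      · exact ⟨h1, Or.inr h2⟩
    · rintro ⟨h1, (h2 | h2)⟩
      · exact ⟨h1, x, Or.inl rfl, h2⟩
      · exact ⟨h1, y, Or.inr rfl, h2⟩
  by_cases hbb' : b = b'
  · subst hbb'; rfl
  by_cases hac : a = c
  · subst hac
    rw [show s(b, a) = s(a, b) from Sym2.eq_swap, show s(b', a) = s(a, b') from Sym2.eq_swap]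
    by_cases h1 : s(a, b) ∈ S <;> by_cases h2 : s(a, b') ∈ S <;> simp [h1, h2]
  have hEab : s(a, b) ∈ G.edgeSet := G.mem_edgeSet.mpr hab
  have hEbc : s(b, c) ∈ G.edgeSet := G.mem_edgeSet.mpr hbc
  have hEab' : s(a, b') ∈ G.edgeSet := G.mem_edgeSet.mpr hab'
  have hEb'c : s(b', c) ∈ G.edgeSet := G.mem_edgeSet.mpr hb'c
  by_cases hphib : φ b = φ b'
  · -- e1 ~ f1 and e2 ~ f2
    have h1 : s(a, b) ∈ A ↔ s(a, b') ∈ A :=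
      mem_A_iff_of_rel hA hEab hEab'
        (by rw [Sym2.map_pair_eq, Sym2.map_pair_eq, hphib]; exact Relation.EqvGen.refl _)
        (touch_of_mem (Sym2.mem_mk_left a b) (Sym2.mem_mk_left a b'))
    have h2 : s(b, c) ∈ A ↔ s(b', c) ∈ A :=
      mem_A_iff_of_rel hA hEbc hEb'c
        (by rw [Sym2.map_pair_eq, Sym2.map_pair_eq, hphib]; exact Relation.EqvGen.refl _)
        (touch_of_mem (Sym2.mem_mk_right b c) (Sym2.mem_mk_right b' c))
    have e1 : (s(a, b) ∈ S) ↔ (s(a, b') ∈ S) := by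
      rw [hS_mem, hS_mem, h1, hphib]
    have e2 : (s(b, c) ∈ S) ↔ (s(b', c) ∈ S) := by
      rw [hS_mem, hS_mem, h2, hphib]
    simp only [e1, e2]
    congr!
  by_cases hphiac : φ a = φ c
  · -- each side is even
    have h1 : s(a, b) ∈ A ↔ s(b, c) ∈ A :=
      mem_A_iff_of_rel hA hEab hEbc
        (by rw [Sym2.map_pair_eq, Sym2.map_pair_eq, ← hphiac, Sym2.eq_swap]
            exact Relation.EqvGen.refl _)
        (touch_of_mem (Sym2.mem_mk_right a b) (Sym2.mem_mk_left b c))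
    have h2 : s(a, b') ∈ A ↔ s(b', c) ∈ A :=
      mem_A_iff_of_rel hA hEab' hEb'c
        (by rw [Sym2.map_pair_eq, Sym2.map_pair_eq, ← hphiac, Sym2.eq_swap]
            exact Relation.EqvGen.refl _)
        (touch_of_mem (Sym2.mem_mk_right a b') (Sym2.mem_mk_left b' c))
    have e1 : (s(a, b) ∈ S) ↔ (s(b, c) ∈ S) := by
      rw [hS_mem, hS_mem, h1, ← hphiac]
      tauto
    have e2 : (s(a, b') ∈ S) ↔ (s(b', c) ∈ S) := by
      rw [hS_mem, hS_mem, h2, ← hphiac]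
      tauto
    simp only [e1, e2]
    by_cases x1 : s(b, c) ∈ S <;> by_cases x2 : s(b', c) ∈ S <;> simp [x1, x2]
  -- generic C4 case
  have hpab : φ a ≠ φ b := (φ.map_adj hab).ne
  have hpbc : φ b ≠ φ c := (φ.map_adj hbc).ne
  have hpab' : φ a ≠ φ b' := (φ.map_adj hab').ne
  have hpb'c : φ b' ≠ φ c := (φ.map_adj hb'c).ne
  have hphib : φ b ≠ φ b' := hphib
  have hc4 : ∀ x y : Sym2 W,
      (x = s(φ a, φ b) ∨ x = s(φ b, φ c) ∨ x = s(φ c, φ b') ∨ x = s(φ b', φ a)) →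
      (y = s(φ a, φ b) ∨ y = s(φ b, φ c) ∨ y = s(φ c, φ b') ∨ y = s(φ b', φ a)) →
      InCommonC4 H x y := by
    intro x y hx hy
    exact ⟨φ a, φ b, φ c, φ b', hpab, hphiac, hpab', hpbc, hphib, fun h => hpb'c h.symm,
      φ.map_adj hab, φ.map_adj hbc, (φ.map_adj hb'c).symm, (φ.map_adj hab').symm, hx, hy⟩
  have h12 : s(a, b) ∈ A ↔ s(b, c) ∈ A :=
    mem_A_iff_of_rel hA hEab hEbc
      (by rw [Sym2.map_pair_eq, Sym2.map_pair_eq]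
          exact Relation.EqvGen.rel _ _
            (hc4 _ _ (Or.inr (Or.inl rfl)) (Or.inl rfl)))
      (touch_of_mem (Sym2.mem_mk_right a b) (Sym2.mem_mk_left b c))
  have h14 : s(a, b) ∈ A ↔ s(a, b') ∈ A :=
    mem_A_iff_of_rel hA hEab hEab'
      (by rw [Sym2.map_pair_eq, Sym2.map_pair_eq]
          exact Relation.EqvGen.rel _ _
            (hc4 _ _ (Or.inr (Or.inr (Or.inr Sym2.eq_swap))) (Or.inl rfl)))
      (touch_of_mem (Sym2.mem_mk_left a b) (Sym2.mem_mk_left a b'))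
  have h23 : s(b, c) ∈ A ↔ s(b', c) ∈ A :=
    mem_A_iff_of_rel hA hEbc hEb'c
      (by rw [Sym2.map_pair_eq, Sym2.map_pair_eq]
          exact Relation.EqvGen.rel _ _
            (hc4 _ _ (Or.inr (Or.inr (Or.inl Sym2.eq_swap))) (Or.inr (Or.inl rfl))))
      (touch_of_mem (Sym2.mem_mk_right b c) (Sym2.mem_mk_right b' c))
  by_cases hmem : s(a, b) ∈ A
  · have m2 : s(b, c) ∈ A := h12.mp hmem
    have m3 : s(a, b') ∈ A := h14.mp hmem
    have m4 : s(b', c) ∈ A := h23.mp m2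
    have r1 : (s(a, b) ∈ S) ↔ (φ a ∈ U ∨ φ b ∈ U) := (hS_mem a b).trans (and_iff_right hmem)
    have r2 : (s(b, c) ∈ S) ↔ (φ b ∈ U ∨ φ c ∈ U) := (hS_mem b c).trans (and_iff_right m2)
    have r3 : (s(a, b') ∈ S) ↔ (φ a ∈ U ∨ φ b' ∈ U) := (hS_mem a b').trans (and_iff_right m3)
    have r4 : (s(b', c) ∈ S) ↔ (φ b' ∈ U ∨ φ c ∈ U) := (hS_mem b' c).trans (and_iff_right m4)
    simp only [r1, r2, r3, r4]
    rcases hU with hU | ⟨u, hU⟩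
    · subst hU; simp
    · subst hU
      simp only [Set.mem_singleton_iff]
      by_cases t1 : φ a = u
      · have n2 : φ b ≠ u := fun h => hpab (t1.trans h.symm)
        have n3 : φ c ≠ u := fun h => hphiac (t1.trans h.symm)
        have n4 : φ b' ≠ u := fun h => hpab' (t1.trans h.symm)
        simp [t1, n2, n3, n4]
      by_cases t2 : φ b = u
      · have n3 : φ c ≠ u := fun h => hpbc (t2.trans h.symm)
        have n4 : φ b' ≠ u := fun h => hphib (t2.trans h.symm)
        simp [t1, t2, n3, n4]
      by_cases t3 : φ c = u
      · have n4 : φ b' ≠ u := fun h => hpb'c (h.trans t3.symm)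
        simp [t1, t2, t3, n4]
      by_cases t4 : φ b' = u
      · simp [t1, t2, t3, t4]
      · simp [t1, t2, t3, t4]
  · have m2 : s(b, c) ∉ A := fun h => hmem (h12.mpr h)
    have m3 : s(a, b') ∉ A := fun h => hmem (h14.mpr h)
    have m4 : s(b', c) ∉ A := fun h => m2 (h23.mpr h)
    have r1 : ¬ (s(a, b) ∈ S) := fun h => hmem ((hS_mem a b).mp h).1
    have r2 : ¬ (s(b, c) ∈ S) := fun h => m2 ((hS_mem b c).mp h).1
    have r3 : ¬ (s(a, b') ∈ S) := fun h => m3 ((hS_mem a b').mp h).1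
    have r4 : ¬ (s(b', c) ∈ S) := fun h => m4 ((hS_mem b' c).mp h).1
    simp [r1, r2, r3, r4]

lemma cardE_step {φ : G →g H} {A : Set (Sym2 V)} (hA : PhiStable φ A)
    (U : Set W) (hU : U = Set.univ ∨ ∃ u : W, U = {u})
    {l l' : List V} (hst : Step G l l') (hw : IsWalk G l) :
    cardE {e | e ∈ A ∧ ∃ v ∈ e, φ v ∈ U} (walkEdges l) % 2 =
      cardE {e | e ∈ A ∧ ∃ v ∈ e, φ v ∈ U} (walkEdges l') % 2 := by
  cases hst with
  | sub p q a b c b' h1 h2 =>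
    have hadj := ((isWalk_append_iff p a (b :: c :: q)).mp hw).2
    rw [isWalk_cons_cons, isWalk_cons_cons] at hadj
    obtain ⟨hab, hbc, -⟩ := hadj
    have heq1 : walkEdges (a :: b :: c :: q) = walkEdges [a, b, c] + walkEdges (c :: q) := by
      simpa using walkEdges_append [a, b] c q
    have heq2 : walkEdges (a :: b' :: c :: q) = walkEdges [a, b', c] + walkEdges (c :: q) := by
      simpa using walkEdges_append [a, b'] c q
    rw [walkEdges_append p a (b :: c :: q), walkEdges_append p a (b' :: c :: q), heq1, heq2]
    simp only [cardE_add]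
    have hcore := core_parity hA U hU hab hbc h1 h2
    omega
  | ins p q a w hw2 =>
    have heq : walkEdges (a :: w :: a :: q) = (s(a, w) ::ₘ s(a, w) ::ₘ 0) + walkEdges (a :: q) := by
      have h0 := walkEdges_append [a, w] a q
      simp only [List.cons_append, List.nil_append] at h0
      rw [h0, show walkEdges [a, w, a] = s(a, w) ::ₘ s(w, a) ::ₘ 0 from rfl,
        show s(w, a) = s(a, w) from Sym2.eq_swap]
    rw [walkEdges_append p a q, walkEdges_append p a (w :: a :: q), heq]
    simp only [cardE_add, cardE_cons, cardE_zero]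
    omega
  | del p q a w =>
    have heq : walkEdges (a :: w :: a :: q) = (s(a, w) ::ₘ s(a, w) ::ₘ 0) + walkEdges (a :: q) := by
      have h0 := walkEdges_append [a, w] a q
      simp only [List.cons_append, List.nil_append] at h0
      rw [h0, show walkEdges [a, w, a] = s(a, w) ::ₘ s(w, a) ::ₘ 0 from rfl,
        show s(w, a) = s(a, w) from Sym2.eq_swap]
    rw [walkEdges_append p a q, walkEdges_append p a (w :: a :: q), heq]
    simp only [cardE_add, cardE_cons, cardE_zero]
    omega

lemma cardE_homotopic {φ : G →g H} {A : Set (Sym2 V)} (hA : PhiStable φ A)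
    (U : Set W) (hU : U = Set.univ ∨ ∃ u : W, U = {u})
    {l l' : List V} (h : Homotopic G l l') (hw : IsWalk G l) :
    cardE {e | e ∈ A ∧ ∃ v ∈ e, φ v ∈ U} (walkEdges l) % 2 =
      cardE {e | e ∈ A ∧ ∃ v ∈ e, φ v ∈ U} (walkEdges l') % 2 := by
  induction h with
  | refl => rfl
  | tail hlm hst ih => exact ih.trans (cardE_step hA U hU hst (isWalk_homotopic hlm hw))

lemma isWalk_support {u v : V} (p : G.Walk u v) : IsWalk G p.support := by
  induction p with
  | nil => trivial
  | @cons u v w h p ih =>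
    rw [SimpleGraph.Walk.support_cons, SimpleGraph.Walk.support_eq_cons p, isWalk_cons_cons]
    exact ⟨h, by rw [← SimpleGraph.Walk.support_eq_cons]; exact ih⟩

lemma support_head? {u v : V} (p : G.Walk u v) : p.support.head? = some u := by
  rw [SimpleGraph.Walk.support_eq_cons]; rfl

lemma support_getLast? {u v : V} (p : G.Walk u v) : p.support.getLast? = some v := by
  induction p with
  | nil => rfl
  | @cons u v w h p ih =>
    rw [SimpleGraph.Walk.support_cons, SimpleGraph.Walk.support_eq_cons p,
      List.getLast?_cons_cons, ← SimpleGraph.Walk.support_eq_cons p, ih]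

lemma catWalk_head? {l l' : List V} (hl : l ≠ []) : (catWalk l l').head? = l.head? := by
  cases l with
  | nil => exact absurd rfl hl
  | cons a t => rfl

lemma catWalk_getLast? {l l' : List V} (hl : l ≠ []) (hh : l.getLast? = l'.head?)
    (hl' : l' ≠ []) : (catWalk l l').getLast? = l'.getLast? := by
  cases l' with
  | nil => exact absurd rfl hl'
  | cons x t =>
    cases t with
    | nil =>
      show (l ++ []).getLast? = _
      rw [List.append_nil, hh]
      rfl
    | cons y t2 =>
      show (l ++ (y :: t2)).getLast? = _
      rw [List.getLast?_append, List.getLast?_cons_cons]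
      cases h : (y :: t2).getLast? with
      | none => simp at h
      | some z => rfl

lemma catWalk_length {l l' : List V} : (catWalk l l').length = l.length + (l'.length - 1) := by
  simp [catWalk]

open Classical in
lemma main_aux {G : SimpleGraph V} {H : SimpleGraph W} (φ : G →g H) (hG : SimplyConnected G)
    {A : Set (Sym2 V)} (hA : PhiStable φ A)
    (U : Set W) (hU : U = Set.univ ∨ ∃ u : W, U = {u})
    {C C' : List V} (hC : IsClosedWalk G C) (hC' : IsClosedWalk G C')
    (hCodd : (C.length - 1) % 2 = 1) (hC'odd : (C'.length - 1) % 2 = 1) :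
    inv2 {e | e ∈ A ∧ ∃ v ∈ e, φ v ∈ U} (walkEdges C) =
      inv2 {e | e ∈ A ∧ ∃ v ∈ e, φ v ∈ U} (walkEdges C') := by
  set S : Set (Sym2 V) := {e | e ∈ A ∧ ∃ v ∈ e, φ v ∈ U} with hS
  have hCne := isWalk_ne_nil hC.1
  have hC'ne := isWalk_ne_nil hC'.1
  set v0 := C.head hCne with hv0
  set v0' := C'.head hC'ne with hv0'
  have hChead : C.head? = some v0 := List.head?_eq_head hCne
  have hClast : C.getLast? = some v0 := by rw [← hC.2, hChead]
  have hC'head : C'.head? = some v0' := List.head?_eq_head hC'ne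
  have hC'last : C'.getLast? = some v0' := by rw [← hC'.2, hC'head]
  obtain ⟨p⟩ := hG.1.preconnected v0 v0'
  set R := p.support with hR
  have hRwalk : IsWalk G R := isWalk_support p
  have hRne : R ≠ [] := isWalk_ne_nil hRwalk
  have hRhead : R.head? = some v0 := support_head? p
  have hRlast : R.getLast? = some v0' := support_getLast? p
  set D := catWalk R C' with hD
  have hDwalk : IsWalk G D := isWalk_cat hRwalk hC'.1 (by rw [hRlast, hC'head])
  have hDne : D ≠ [] := isWalk_ne_nil hDwalk
  have hDhead : D.head? = some v0 := by rw [hD, catWalk_head? hRne, hRhead]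
  have hDlast : D.getLast? = some v0' := by
    rw [hD, catWalk_getLast? hRne (by rw [hRlast, hC'head]) hC'ne, hC'last]
  have hRrevwalk : IsWalk G R.reverse := isWalk_reverse hRwalk
  have hRrevne : R.reverse ≠ [] := isWalk_ne_nil hRrevwalk
  have hRrevhead : R.reverse.head? = some v0' := by rw [List.head?_reverse, hRlast]
  have hRrevlast : R.reverse.getLast? = some v0 := by rw [List.getLast?_reverse, hRhead]
  set C2 := catWalk D R.reverse with hC2
  have hC2walk : IsWalk G C2 := isWalk_cat hDwalk hRrevwalk (by rw [hDlast, hRrevhead])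
  have hC2head : C2.head? = some v0 := by rw [hC2, catWalk_head? hDne, hDhead]
  have hC2last : C2.getLast? = some v0 := by
    rw [hC2, catWalk_getLast? hDne (by rw [hDlast, hRrevhead]) hRrevne, hRrevlast]
  have hRpos : 1 ≤ R.length := List.length_pos_iff.mpr hRne
  have hC'pos : 1 ≤ C'.length := List.length_pos_iff.mpr hC'ne
  have hC2len : C2.length = D.length + (R.length - 1) := by
    rw [hC2, catWalk_length, List.length_reverse]
  have hDlen : D.length = R.length + (C'.length - 1) := by
    rw [hD, catWalk_length]
  have hC2odd : (C2.length - 1) % 2 = 1 := by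
    rw [hC2len, hDlen]; omega
  have hhom : Homotopic G C C2 :=
    hG.2 C C2 hC.1 hC2walk (by rw [hChead, hC2head]) (by rw [hClast, hC2last])
      (by rw [hCodd, hC2odd])
  have h1 : cardE S (walkEdges C) % 2 = cardE S (walkEdges C2) % 2 :=
    cardE_homotopic hA U hU hhom hC.1
  have hedges : walkEdges C2 = (walkEdges R + walkEdges C') + walkEdges R := by
    rw [hC2, walkEdges_cat hDne (by rw [hDlast, hRrevhead]) hRrevne,
      hD, walkEdges_cat hRne (by rw [hRlast, hC'head]) hC'ne, walkEdges_reverse]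
  rw [inv2_eq_cardE, inv2_eq_cardE, h1, hedges, cardE_add, cardE_add]
  omega

end Aux

/-- In a simply connected graph, any two odd closed walks have the same
intersection invariants. -/
theorem inv_odd_closed_walks_eq (G : SimpleGraph V) (H : SimpleGraph W)
    (φ : G →g H) (hG : SimplyConnected G)
    (A : Set (Sym2 V)) (hA : PhiStable φ A)
    (C C' : List V) (hC : IsClosedWalk G C) (hC' : IsClosedWalk G C')
    (hCodd : (C.length - 1) % 2 = 1) (hC'odd : (C'.length - 1) % 2 = 1) :
    inv2 A (walkEdges C) = inv2 A (walkEdges C') ∧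
      ∀ u : W, inv2 (Au φ A u) (walkEdges C) = inv2 (Au φ A u) (walkEdges C') := by
  constructor
  · have hEq : {e | e ∈ A ∧ ∃ v ∈ e, φ v ∈ (Set.univ : Set W)} = A := by
      ext e
      induction e using Sym2.ind with
      | _ x y => simp [Sym2.mem_iff]
    have := main_aux φ hG hA (Set.univ : Set W) (Or.inl rfl) hC hC' hCodd hC'odd
    rwa [hEq] at this
  · intro u
    have hEq : {e | e ∈ A ∧ ∃ v ∈ e, φ v ∈ ({u} : Set W)} = Au φ A u := by
      ext e
      simp [Au, Set.mem_singleton_iff]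
    have := main_aux φ hG hA ({u} : Set W) (Or.inr ⟨u, rfl⟩) hC hC' hCodd hC'odd
    rwa [hEq] at this

end Discrete
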